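/- The number c(n,k) of circular permutations (n+1-cycles) in S_{n+1} having exactly k large circular descents equals the Eulerian number a(n,k), the number of permutations of S_n with k descents. -/

import Mathlib

/-- Eulerian numbers: `a(n,k) = (k+1)a(n−1,k) + (n−k)a(n−1,k−1)`,
with `a(0,k) = 0` for `k ≥ 1` and `a(n,0) = 1`. -/
def eulerian : ℕ → ℕ → ℕ
  | 0, 0 => 1
  | 0, _ + 1 => 0
  | _ + 1, 0 => 1
  | n + 1, k + 1 => (k + 2) * eulerian n (k + 1) + (n + 1 - (k + 1)) * eulerian n k

/-- The number of large circular descents of a permutation `σ`: the number of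
letters `b` whose cyclic predecessor `a = σ⁻¹ b` satisfies `a > b + 1`. -/
def numLCD {m : ℕ} (σ : Equiv.Perm (Fin m)) : ℕ :=
  (Finset.univ.filter (fun b : Fin m => ((σ⁻¹ b : Fin m) : ℕ) > (b : ℕ) + 1)).card

open Equiv Equiv.Perm Finset

namespace CDE

variable {n : ℕ}

/-- lift a permutation of `Fin (n+1)` to `Fin (n+2)` fixing `last`. -/
def lift (σ : Perm (Fin (n + 1))) : Perm (Fin (n + 2)) :=
  Equiv.permCongr finSuccEquivLast.symm σ.optionCongr

@[simp] lemma lift_castSucc (σ : Perm (Fin (n + 1))) (x : Fin (n + 1)) :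
    lift σ x.castSucc = (σ x).castSucc := by
  simp [lift]

lemma castSucc_ne_last' (x : Fin (n + 1)) : x.castSucc ≠ Fin.last (n + 1) :=
  (Fin.castSucc_lt_last x).ne

lemma finSuccEquivLast_of_ne {y : Fin (n + 2)} (h : y ≠ Fin.last (n + 1)) :
    finSuccEquivLast y = some (y.castPred h) := by
  conv_lhs => rw [← Fin.castSucc_castPred y h]
  rw [finSuccEquivLast_castSucc]

@[simp] lemma lift_last (σ : Perm (Fin (n + 1))) :
    lift σ (Fin.last (n + 1)) = Fin.last (n + 1) := by
  simp [lift]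

/-- insertion of the top element after position `a`. -/
def ins (σ : Perm (Fin (n + 1))) (a : Fin (n + 1)) : Perm (Fin (n + 2)) :=
  Equiv.swap a.castSucc (Fin.last (n + 1)) * lift σ

lemma ins_castSucc (σ : Perm (Fin (n + 1))) (a x : Fin (n + 1)) :
    ins σ a x.castSucc = if σ x = a then Fin.last (n + 1) else (σ x).castSucc := by
  simp only [ins, Perm.mul_apply, lift_castSucc]
  rcases eq_or_ne (σ x) a with h | h
  · simp [h]
  · rw [swap_apply_of_ne_of_ne (by simpa using h) (castSucc_ne_last' _), if_neg h]

lemma ins_last (σ : Perm (Fin (n + 1))) (a : Fin (n + 1)) :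
    ins σ a (Fin.last (n + 1)) = a.castSucc := by
  simp [ins]

lemma ins_inv_castSucc (σ : Perm (Fin (n + 1))) (a x : Fin (n + 1)) :
    (ins σ a)⁻¹ x.castSucc =
      if x = a then Fin.last (n + 1) else (σ⁻¹ x).castSucc := by
  rw [Perm.inv_eq_iff_eq]
  rcases eq_or_ne x a with h | h
  · simp [h, ins_last]
  · rw [if_neg h, ins_castSucc, (show σ (σ⁻¹ x) = x from σ.apply_symm_apply x), if_neg h]

lemma ins_inv_last (σ : Perm (Fin (n + 1))) (a : Fin (n + 1)) :
    (ins σ a)⁻¹ (Fin.last (n + 1)) = (σ⁻¹ a).castSucc := by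
  rw [Perm.inv_eq_iff_eq, ins_castSucc, (show σ (σ⁻¹ a) = a from σ.apply_symm_apply a), if_pos rfl]

/-- deletion of the top element. -/
def drop (σ : Perm (Fin (n + 2))) : Perm (Fin (n + 1)) :=
  Equiv.removeNone (Equiv.permCongr finSuccEquivLast σ)

lemma drop_apply_of_ne (σ : Perm (Fin (n + 2))) (x : Fin (n + 1))
    (h : σ x.castSucc ≠ Fin.last (n + 1)) :
    (drop σ x).castSucc = σ x.castSucc := by
  have h2 : (Equiv.permCongr finSuccEquivLast σ) (some x) =
      some ((σ x.castSucc).castPred h) := by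
    simp only [Equiv.permCongr_apply, Equiv.symm_symm, finSuccEquivLast_castSucc,
      Option.map_some, optionCongr_apply, finSuccEquivLast_symm_some]
    exact finSuccEquivLast_of_ne h
  have := Equiv.removeNone_some _ ⟨_, h2⟩
  rw [h2] at this
  have : drop σ x = (σ x.castSucc).castPred h := Option.some_injective _ this
  rw [this, Fin.castSucc_castPred]

lemma drop_apply_of_eq (σ : Perm (Fin (n + 2))) (x : Fin (n + 1))
    (h : σ x.castSucc = Fin.last (n + 1)) :
    (drop σ x).castSucc = σ (Fin.last (n + 1)) := by
  have h2 : (Equiv.permCongr finSuccEquivLast σ) (some x) = none := by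
    simp [Equiv.permCongr_apply, h]
  have h3 := Equiv.removeNone_none _ h2
  rw [show (Equiv.permCongr finSuccEquivLast σ) none = finSuccEquivLast (σ (Fin.last (n+1))) by
    simp [Equiv.permCongr_apply]] at h3
  have hne : σ (Fin.last (n + 1)) ≠ Fin.last (n + 1) := by
    intro hc
    exact (castSucc_ne_last' x) (σ.injective (h.trans hc.symm))
  rw [finSuccEquivLast_of_ne hne] at h3
  have : drop σ x = (σ (Fin.last (n+1))).castPred hne := Option.some_injective _ h3
  rw [this, Fin.castSucc_castPred]

@[simp] lemma drop_ins (σ : Perm (Fin (n + 1))) (a : Fin (n + 1)) :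
    drop (ins σ a) = σ := by
  ext x
  rcases eq_or_ne (σ x) a with h | h
  · have he : ins σ a x.castSucc = Fin.last (n + 1) := by rw [ins_castSucc, if_pos h]
    have := drop_apply_of_eq (ins σ a) x he
    rw [ins_last] at this
    have e2 : drop (ins σ a) x = a := Fin.castSucc_injective _ this
    rw [e2, h]
  · have he : ins σ a x.castSucc ≠ Fin.last (n + 1) := by
      rw [ins_castSucc, if_neg h]; exact castSucc_ne_last' _
    have := drop_apply_of_ne (ins σ a) x he
    rw [ins_castSucc, if_neg h] at this
    exact congrArg Fin.val (Fin.castSucc_injective _ this)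

lemma ins_drop (σ : Perm (Fin (n + 2))) (h : σ (Fin.last (n + 1)) ≠ Fin.last (n + 1)) :
    ins (drop σ) ((σ (Fin.last (n + 1))).castPred h) = σ := by
  set a := (σ (Fin.last (n + 1))).castPred h with ha
  have hsa : σ (Fin.last (n + 1)) = a.castSucc := (Fin.castSucc_castPred _ h).symm
  ext b
  rcases Fin.eq_castSucc_or_eq_last b with ⟨x, rfl⟩ | rfl
  · rcases eq_or_ne (σ x.castSucc) (Fin.last (n + 1)) with hx | hx
    · have hd : (drop σ x).castSucc = σ (Fin.last (n + 1)) := drop_apply_of_eq σ x hx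
      have : drop σ x = a := Fin.castSucc_injective _ (hd.trans hsa)
      rw [ins_castSucc, if_pos this, hx]
    · have hd : (drop σ x).castSucc = σ x.castSucc := drop_apply_of_ne σ x hx
      have hda : drop σ x ≠ a := by
        intro hc
        apply castSucc_ne_last' x
        apply σ.injective
        rw [← hd, hc, ← hsa]
      rw [ins_castSucc, if_neg hda]
      exact congrArg Fin.val hd
  · simp [ins_last, hsa]


lemma sameCycle_ins_step (σ : Perm (Fin (n + 1))) (a x : Fin (n + 1)) :
    (ins σ a).SameCycle x.castSucc (σ x).castSucc := by
  rcases eq_or_ne (σ x) a with h | h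
  · have h1 : ins σ a x.castSucc = Fin.last (n + 1) := by rw [ins_castSucc, if_pos h]
    have h2 : ins σ a (Fin.last (n + 1)) = (σ x).castSucc := by rw [ins_last, h]
    exact ⟨2, by
      rw [show ((2 : ℤ)) = ((2 : ℕ) : ℤ) from rfl, zpow_natCast, pow_succ, pow_one,
        Perm.mul_apply, h1, h2]⟩
  · exact ⟨1, by rw [zpow_one, ins_castSucc, if_neg h]⟩

lemma sameCycle_ins_pow (σ : Perm (Fin (n + 1))) (a x : Fin (n + 1)) (m : ℕ) :
    (ins σ a).SameCycle x.castSucc ((σ ^ m) x).castSucc := by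
  induction m with
  | zero => exact ⟨0, by simp⟩
  | succ m ih =>
    have step := sameCycle_ins_step σ a ((σ ^ m) x)
    rw [pow_succ', Perm.mul_apply]
    exact ih.trans step

lemma sameCycle_last_ins (σ : Perm (Fin (n + 1))) (a : Fin (n + 1)) :
    (ins σ a).SameCycle (Fin.last (n + 1)) a.castSucc :=
  ⟨1, by rw [zpow_one, ins_last]⟩

lemma isCycleOn_ins {σ : Perm (Fin (n + 1))} (hσ : σ.IsCycleOn Set.univ) (a : Fin (n + 1)) :
    (ins σ a).IsCycleOn Set.univ := by
  have hσ' : σ.IsCycleOn (Finset.univ : Finset (Fin (n + 1))) := by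
    rwa [Finset.coe_univ]
  have key : ∀ x y : Fin (n + 1), (ins σ a).SameCycle x.castSucc y.castSucc := by
    intro x y
    obtain ⟨m, hm⟩ := hσ'.exists_pow_eq (Finset.mem_univ x) (Finset.mem_univ y)
    have := sameCycle_ins_pow σ a x m
    rwa [hm.2] at this
  constructor
  · exact (ins σ a).bijective.bijOn_univ
  · intro x _ y _
    induction x using Fin.lastCases with
    | last =>
      induction y using Fin.lastCases with
      | last => exact SameCycle.refl _ _
      | cast v => exact (sameCycle_last_ins σ a).trans (key a v)
    | cast u =>
      induction y using Fin.lastCases with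
      | last => exact ((sameCycle_last_ins σ a).trans (key a u)).symm
      | cast v => exact key u v

lemma sameCycle_of_ins_pow (σ : Perm (Fin (n + 1))) (a : Fin (n + 1)) :
    ∀ m (x y : Fin (n + 1)), ((ins σ a) ^ m) x.castSucc = y.castSucc → σ.SameCycle x y := by
  intro m
  induction m using Nat.strong_induction_on with
  | _ m ih =>
    intro x y hm
    match m, hm with
    | 0, hm =>
      cases Fin.castSucc_injective _ hm
      exact SameCycle.refl _ _
    | (m + 1), hm =>
      have hstep : σ.SameCycle x (σ x) := ⟨1, by rw [zpow_one]⟩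
      rcases eq_or_ne (σ x) a with h | h
      · have h1 : ins σ a x.castSucc = Fin.last (n + 1) := by rw [ins_castSucc, if_pos h]
        match m, hm with
        | 0, hm =>
          rw [pow_one, h1] at hm
          exact absurd hm.symm (castSucc_ne_last' y)
        | (m' + 1), hm =>
          rw [pow_succ, Perm.mul_apply, h1, pow_succ, Perm.mul_apply, ins_last] at hm
          have : σ.SameCycle a y := ih m' (by omega) a y hm
          exact hstep.trans (h ▸ this)
      · have h1 : ins σ a x.castSucc = (σ x).castSucc := by rw [ins_castSucc, if_neg h]
        rw [pow_succ, Perm.mul_apply, h1] at hm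
        exact hstep.trans (ih m (by omega) (σ x) y hm)

lemma isCycleOn_of_ins {σ : Perm (Fin (n + 1))} {a : Fin (n + 1)}
    (hσ : (ins σ a).IsCycleOn Set.univ) : σ.IsCycleOn Set.univ := by
  have hσ' : (ins σ a).IsCycleOn (Finset.univ : Finset (Fin (n + 2))) := by
    rwa [Finset.coe_univ]
  constructor
  · exact σ.bijective.bijOn_univ
  · intro x _ y _
    obtain ⟨m, hm⟩ := hσ'.exists_pow_eq (Finset.mem_univ x.castSucc) (Finset.mem_univ y.castSucc)
    exact sameCycle_of_ins_pow σ a m x y hm.2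


lemma numLCD_def {m : ℕ} (σ : Perm (Fin m)) :
    numLCD σ = (Finset.univ.filter (fun b : Fin m => ((σ⁻¹ b : Fin m) : ℕ) > (b : ℕ) + 1)).card :=
  rfl

lemma numLCD_ins (σ : Perm (Fin (n + 1))) (a : Fin (n + 1)) :
    numLCD (ins σ a) = (univ.filter fun b : Fin (n + 1) =>
      if b = a then a ≠ Fin.last n else ((σ⁻¹ b : Fin (n + 1)) : ℕ) > (b : ℕ) + 1).card := by
  rw [numLCD_def]
  have hmap : (univ.filter fun b : Fin (n + 2) =>
      (((ins σ a)⁻¹ b : Fin (n + 2)) : ℕ) > (b : ℕ) + 1)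
      = ((univ.filter fun b : Fin (n + 1) =>
      if b = a then a ≠ Fin.last n else ((σ⁻¹ b : Fin (n + 1)) : ℕ) > (b : ℕ) + 1).map
        Fin.castSuccEmb) := by
    ext b
    simp only [Finset.mem_map, Finset.mem_filter, Finset.mem_univ, true_and, Fin.coe_castSuccEmb]
    induction b using Fin.lastCases with
    | last =>
      rw [ins_inv_last]
      constructor
      · intro h
        exfalso
        have h1 : ((σ⁻¹ a).castSucc : ℕ) ≤ n := by
          simpa using Fin.is_le (σ⁻¹ a)
        have h2 : ((Fin.last (n + 1) : Fin (n + 2)) : ℕ) = n + 1 := rfl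
        omega
      · rintro ⟨x, _, hx⟩
        exact absurd hx (castSucc_ne_last' x)
    | cast x =>
      rw [ins_inv_castSucc]
      constructor
      · intro h
        refine ⟨x, ?_, rfl⟩
        rcases eq_or_ne x a with rfl | hxa
        · rw [if_pos rfl] at h
          rw [if_pos rfl]
          intro hc
          rw [hc] at h
          simp only [Fin.val_last, Fin.coe_castSucc] at h
          omega
        · rw [if_neg hxa] at h ⊢
          simpa using h
      · rintro ⟨y, hy, hxy⟩
        have : y = x := Fin.castSucc_injective _ hxy
        subst this
        rcases eq_or_ne y a with rfl | hxa
        · rw [if_pos rfl] at hy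
          rw [if_pos rfl]
          have h1 : (y : ℕ) ≤ n := Fin.is_le y
          have h2 : (y : ℕ) ≠ n := fun hc => hy (Fin.ext (by simp [hc]))
          simp only [Fin.val_last, Fin.coe_castSucc]
          omega
        · rw [if_neg hxa] at hy ⊢
          simpa using hy
  rw [hmap, Finset.card_map]

lemma numLCD_ins_eq (σ : Perm (Fin (n + 1))) (a : Fin (n + 1)) :
    numLCD (ins σ a) =
      if ((σ⁻¹ a : Fin (n + 1)) : ℕ) > (a : ℕ) + 1 ∨ a = Fin.last n then numLCD σ
      else numLCD σ + 1 := by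
  rw [numLCD_ins, numLCD_def]
  by_cases hR : ((σ⁻¹ a : Fin (n + 1)) : ℕ) > (a : ℕ) + 1
  · rw [if_pos (Or.inl hR)]
    congr 1
    apply Finset.filter_congr
    intro b _
    rcases eq_or_ne b a with rfl | hb
    · have hbl : b ≠ Fin.last n := by
        intro hc
        rw [hc] at hR
        have h1 := Fin.is_le (σ⁻¹ (Fin.last n))
        simp only [Fin.val_last] at hR
        omega
      simpa [hbl] using hR
    · simp [hb]
  · by_cases hl : a = Fin.last n
    · rw [if_pos (Or.inr hl)]
      congr 1
      apply Finset.filter_congr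
      intro b _
      rcases eq_or_ne b a with rfl | hb
      · simp [hl, hR]
      · simp [hb]
    · rw [if_neg (by tauto)]
      have hins : (univ.filter fun b : Fin (n + 1) =>
          if b = a then a ≠ Fin.last n else ((σ⁻¹ b : Fin (n + 1)) : ℕ) > (b : ℕ) + 1)
          = insert a (univ.filter fun b : Fin (n + 1) =>
            ((σ⁻¹ b : Fin (n + 1)) : ℕ) > (b : ℕ) + 1) := by
        ext b
        simp only [Finset.mem_filter, Finset.mem_univ, true_and, Finset.mem_insert]
        rcases eq_or_ne b a with rfl | hb
        · simp [hl]
        · simp [hb]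
      rw [hins, Finset.card_insert_of_notMem (by simpa using hR)]

lemma card_ins_filter (σ : Perm (Fin (n + 1))) (k : ℕ) :
    (univ.filter fun a : Fin (n + 1) => numLCD (ins σ a) = k).card =
      if k = numLCD σ then numLCD σ + 1
      else if k = numLCD σ + 1 then n - numLCD σ else 0 := by
  have hRlast : ¬ ((σ⁻¹ (Fin.last n) : Fin (n + 1)) : ℕ) > ((Fin.last n : Fin (n + 1)) : ℕ) + 1 := by
    have := Fin.is_le (σ⁻¹ (Fin.last n))
    simp only [Fin.val_last]
    omega
  have hcard : (univ.filter fun a : Fin (n + 1) =>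
      ((σ⁻¹ a : Fin (n + 1)) : ℕ) > (a : ℕ) + 1 ∨ a = Fin.last n).card = numLCD σ + 1 := by
    have : (univ.filter fun a : Fin (n + 1) =>
        ((σ⁻¹ a : Fin (n + 1)) : ℕ) > (a : ℕ) + 1 ∨ a = Fin.last n)
        = insert (Fin.last n)
          (univ.filter fun a : Fin (n + 1) => ((σ⁻¹ a : Fin (n + 1)) : ℕ) > (a : ℕ) + 1) := by
      ext a
      simp only [Finset.mem_filter, Finset.mem_univ, true_and, Finset.mem_insert]
      tauto
    rw [this, Finset.card_insert_of_notMem (by simp [hRlast]), numLCD_def]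
  by_cases hk : k = numLCD σ
  · rw [if_pos hk]
    have he : (univ.filter fun a : Fin (n + 1) => numLCD (ins σ a) = k)
        = univ.filter fun a : Fin (n + 1) =>
          ((σ⁻¹ a : Fin (n + 1)) : ℕ) > (a : ℕ) + 1 ∨ a = Fin.last n := by
      apply Finset.filter_congr
      intro a _
      rw [numLCD_ins_eq]
      subst hk
      split_ifs with h
      · simp only [h]
      · simp only [h, iff_false]
        omega
    rw [he, hcard]
  · by_cases hk1 : k = numLCD σ + 1
    · rw [if_neg hk, if_pos hk1]
      have he : (univ.filter fun a : Fin (n + 1) => numLCD (ins σ a) = k)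
          = univ.filter fun a : Fin (n + 1) =>
            ¬ (((σ⁻¹ a : Fin (n + 1)) : ℕ) > (a : ℕ) + 1 ∨ a = Fin.last n) := by
        apply Finset.filter_congr
        intro a _
        rw [numLCD_ins_eq]
        split_ifs with h
        · simp only [h, not_true_eq_false, iff_false]
          omega
        · simp only [h, hk1, not_false_eq_true, iff_true]
      have htot := Finset.card_filter_add_card_filter_not
        (s := (univ : Finset (Fin (n + 1))))
        (fun a : Fin (n + 1) => ((σ⁻¹ a : Fin (n + 1)) : ℕ) > (a : ℕ) + 1 ∨ a = Fin.last n)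
      rw [hcard] at htot
      rw [he]
      have hcu : (univ : Finset (Fin (n + 1))).card = n + 1 := by simp
      omega
    · rw [if_neg hk, if_neg hk1]
      rw [Finset.card_eq_zero, Finset.filter_eq_empty_iff]
      intro a _
      rw [numLCD_ins_eq]
      split_ifs with h
      · omega
      · omega


open scoped Classical in
lemma card_step (n k : ℕ) :
    ((univ : Finset (Perm (Fin (n + 2)))).filter
        (fun σ => σ.IsCycleOn Set.univ ∧ numLCD σ = k)).card
      = ∑ σ' ∈ (univ : Finset (Perm (Fin (n + 1)))).filter (fun σ' => σ'.IsCycleOn Set.univ),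
        (if k = numLCD σ' then numLCD σ' + 1
          else if k = numLCD σ' + 1 then n - numLCD σ' else 0) := by
  have hbij : ((univ : Finset (Perm (Fin (n + 2)))).filter
        (fun σ => σ.IsCycleOn Set.univ ∧ numLCD σ = k)).card
      = ((univ : Finset (Perm (Fin (n + 1)) × Fin (n + 1))).filter
          (fun p => p.1.IsCycleOn Set.univ ∧ numLCD (ins p.1 p.2) = k)).card := by
    apply Finset.card_bij'
      (i := fun σ _ => (drop σ, if h : σ (Fin.last (n + 1)) = Fin.last (n + 1) then 0
        else (σ (Fin.last (n + 1))).castPred h))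
      (j := fun p _ => ins p.1 p.2)
    · intro σ hσ
      rw [Finset.mem_filter] at hσ ⊢
      obtain ⟨-, hcyc, hnum⟩ := hσ
      have h : σ (Fin.last (n + 1)) ≠ Fin.last (n + 1) :=
        hcyc.apply_ne Set.nontrivial_univ (Set.mem_univ _)
      rw [dif_neg h]
      have hid := ins_drop σ h
      refine ⟨Finset.mem_univ _, ?_, ?_⟩
      · exact isCycleOn_of_ins (by rwa [hid])
      · rwa [hid]
    · intro p hp
      rw [Finset.mem_filter] at hp ⊢
      exact ⟨Finset.mem_univ _, isCycleOn_ins hp.2.1 p.2, hp.2.2⟩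
    · intro σ hσ
      rw [Finset.mem_filter] at hσ
      have h : σ (Fin.last (n + 1)) ≠ Fin.last (n + 1) :=
        hσ.2.1.apply_ne Set.nontrivial_univ (Set.mem_univ _)
      simp only [dif_neg h]
      exact ins_drop σ h
    · intro p hp
      have h1 : ins p.1 p.2 (Fin.last (n + 1)) = p.2.castSucc := ins_last p.1 p.2
      have h2 : ins p.1 p.2 (Fin.last (n + 1)) ≠ Fin.last (n + 1) := by
        rw [h1]; exact castSucc_ne_last' _
      ext : 1
      · simp only [drop_ins]
      · simp only [dif_neg h2]
        exact Fin.castSucc_injective _ (by rw [Fin.castSucc_castPred, h1])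
  have h1 : ∀ σ' : Perm (Fin (n + 1)),
      (∑ a : Fin (n + 1), if σ'.IsCycleOn Set.univ ∧ numLCD (ins σ' a) = k then 1 else 0)
      = if σ'.IsCycleOn Set.univ then
          (if k = numLCD σ' then numLCD σ' + 1
            else if k = numLCD σ' + 1 then n - numLCD σ' else 0) else 0 := by
    intro σ'
    by_cases hc : σ'.IsCycleOn Set.univ
    · rw [if_pos hc, ← card_ins_filter σ' k, Finset.card_filter]
      apply Finset.sum_congr rfl
      intro a _
      simp [hc]
    · rw [if_neg hc]
      apply Finset.sum_eq_zero
      intro a _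
      simp [hc]
  rw [hbij, Finset.card_filter, Fintype.sum_prod_type]
  simp only [h1]
  rw [Finset.sum_filter]

set_option maxHeartbeats 800000 in
open scoped Classical in
lemma count_eq (n : ℕ) : ∀ k,
    ((univ : Finset (Perm (Fin (n + 1)))).filter
        (fun σ => σ.IsCycleOn Set.univ ∧ numLCD σ = k)).card = eulerian n k := by
  induction n with
  | zero =>
    intro k
    have h1 : ∀ σ : Perm (Fin 1), σ = 1 := by
      intro σ; ext x; simp [Subsingleton.elim (σ x) x]
    have hcyc : (1 : Perm (Fin 1)).IsCycleOn Set.univ := by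
      constructor
      · exact (1 : Perm (Fin 1)).bijective.bijOn_univ
      · intro x _ y _
        have : x = y := Subsingleton.elim x y
        subst this
        exact Equiv.Perm.SameCycle.refl _ _
    have hnum : numLCD (1 : Perm (Fin 1)) = 0 := by
      rw [numLCD_def, Finset.card_eq_zero, Finset.filter_eq_empty_iff]
      intro b _
      simp
    cases k with
    | zero =>
      have he : (univ : Finset (Perm (Fin 1))).filter
          (fun σ => σ.IsCycleOn Set.univ ∧ numLCD σ = 0) = univ := by
        apply Finset.filter_true_of_mem
        intro σ _
        rw [h1 σ]
        exact ⟨hcyc, hnum⟩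
      rw [he, show eulerian 0 0 = 1 from rfl]
      simp [Finset.card_univ]
    | succ k =>
      rw [show eulerian 0 (k + 1) = 0 from rfl, Finset.card_eq_zero,
        Finset.filter_eq_empty_iff]
      intro σ _
      rw [h1 σ, hnum]
      simp
  | succ n ih =>
    intro k
    rw [card_step n k]
    set A := (univ : Finset (Perm (Fin (n + 1)))).filter (fun σ' => σ'.IsCycleOn Set.univ)
      with hA
    cases k with
    | zero =>
      have hc : ∀ σ' ∈ A,
          (if 0 = numLCD σ' then numLCD σ' + 1
            else if 0 = numLCD σ' + 1 then n - numLCD σ' else 0)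
          = if numLCD σ' = 0 then 1 else 0 := by
        intro σ' _
        split_ifs <;> first | omega | exact (by assumption : False).elim
      rw [Finset.sum_congr rfl hc, ← Finset.card_filter, hA, Finset.filter_filter]
      rw [show eulerian (n + 1) 0 = 1 from rfl]
      rw [ih 0, show eulerian n 0 = 1 by cases n <;> rfl]
    | succ k' =>
      rw [← Finset.sum_filter_add_sum_filter_not A (fun σ' => numLCD σ' = k' + 1)]
      have e1 : ∑ σ' ∈ A.filter (fun σ' => numLCD σ' = k' + 1),
          (if k' + 1 = numLCD σ' then numLCD σ' + 1
            else if k' + 1 = numLCD σ' + 1 then n - numLCD σ' else 0)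
          = (A.filter (fun σ' => numLCD σ' = k' + 1)).card * (k' + 2) := by
        rw [Finset.sum_congr rfl (g := fun _ => k' + 2) ?_, Finset.sum_const, smul_eq_mul]
        intro σ' hσ'
        rw [Finset.mem_filter] at hσ'
        show _ = k' + 2
        rw [hσ'.2]
        simp
      rw [e1, ← Finset.sum_filter_add_sum_filter_not
        (A.filter (fun σ' => ¬ numLCD σ' = k' + 1)) (fun σ' => numLCD σ' = k')]
      have e2 : ∑ σ' ∈ (A.filter (fun σ' => ¬ numLCD σ' = k' + 1)).filter
            (fun σ' => numLCD σ' = k'),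
          (if k' + 1 = numLCD σ' then numLCD σ' + 1
            else if k' + 1 = numLCD σ' + 1 then n - numLCD σ' else 0)
          = ((A.filter (fun σ' => ¬ numLCD σ' = k' + 1)).filter
              (fun σ' => numLCD σ' = k')).card * (n - k') := by
        rw [Finset.sum_congr rfl (g := fun _ => n - k') ?_, Finset.sum_const, smul_eq_mul]
        intro σ' hσ'
        rw [Finset.mem_filter, Finset.mem_filter] at hσ'
        show _ = n - k'
        rw [hσ'.2]
        split_ifs <;> first | omega | exact (by assumption : False).elim
      have e3 : ∑ σ' ∈ (A.filter (fun σ' => ¬ numLCD σ' = k' + 1)).filter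
            (fun σ' => ¬ numLCD σ' = k'),
          (if k' + 1 = numLCD σ' then numLCD σ' + 1
            else if k' + 1 = numLCD σ' + 1 then n - numLCD σ' else 0) = 0 := by
        apply Finset.sum_eq_zero
        intro σ' hσ'
        rw [Finset.mem_filter, Finset.mem_filter] at hσ'
        have hne1 := hσ'.1.2
        have hne2 := hσ'.2
        split_ifs <;> first | omega | exact (by assumption : False).elim
      rw [e2, e3]
      have c1 : (A.filter (fun σ' => numLCD σ' = k' + 1)).card = eulerian n (k' + 1) := by
        rw [hA, Finset.filter_filter]
        exact ih (k' + 1)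
      have c2 : ((A.filter (fun σ' => ¬ numLCD σ' = k' + 1)).filter
          (fun σ' => numLCD σ' = k')).card = eulerian n k' := by
        rw [Finset.filter_filter]
        have : A.filter (fun σ' => ¬ numLCD σ' = k' + 1 ∧ numLCD σ' = k')
            = A.filter (fun σ' => numLCD σ' = k') := by
          apply Finset.filter_congr
          intro σ' _
          constructor
          · exact fun h => h.2
          · intro h
            exact ⟨by omega, h⟩
        rw [this, hA, Finset.filter_filter]
        exact ih k'
      rw [c1, c2]
      rw [show eulerian (n + 1) (k' + 1)
        = (k' + 2) * eulerian n (k' + 1) + (n + 1 - (k' + 1)) * eulerian n k' from rfl]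
      rw [Nat.succ_sub_succ]
      ring

end CDE

theorem circular_descents_eulerian (n k : ℕ) :
    Nat.card {σ : Equiv.Perm (Fin (n + 1)) //
      σ.IsCycleOn (Set.univ : Set (Fin (n + 1))) ∧ numLCD σ = k} = eulerian n k := by
  classical
  rw [Nat.card_eq_fintype_card, Fintype.card_subtype]
  convert CDE.count_eq n k using 2
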